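/- If S and S' are orthohedral sets with rk(S) = rk(S') > rk(S ∩ S'), then h(S ∪ S') = h(S) + h(S'). -/

import Mathlib

open Pointwise

namespace PeiPaper

/-- Points of the face of the standard orthant spanned by the canonical basis vectors in `Y`. -/
def stdFace (N : ℕ) (Y : Finset (Fin N)) : Set (Fin N → ℤ) :=
  {v | (∀ i, 0 ≤ v i) ∧ ∀ i, i ∉ Y → v i = 0}

/-- Integral orthogonal matrix. -/
def IsOrthMat {N : ℕ} (A : Matrix (Fin N) (Fin N) ℤ) : Prop :=
  A * A.transpose = 1

/-- `L` is an integral orthant of rank `k` in `ℤ^N`: an affine-orthogonal image of a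
rank-`k` face of the standard orthant. -/
def IsOrthantOfRank {N : ℕ} (L : Set (Fin N → ℤ)) (k : ℕ) : Prop :=
  ∃ (a : Fin N → ℤ) (A : Matrix (Fin N) (Fin N) ℤ) (Y : Finset (Fin N)),
    IsOrthMat A ∧ Y.card = k ∧ L = (fun v => a + A.mulVec v) '' stdFace N Y

def IsOrthant {N : ℕ} (L : Set (Fin N → ℤ)) : Prop := ∃ k, IsOrthantOfRank L k

/-- `S` is orthohedral: a finite union of integral orthants. -/
def IsOrthohedral {N : ℕ} (S : Set (Fin N → ℤ)) : Prop :=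
  ∃ 𝓛 : Set (Set (Fin N → ℤ)), 𝓛.Finite ∧ (∀ L ∈ 𝓛, IsOrthant L) ∧ S = ⋃₀ 𝓛

/-- The rank of a set: the maximal rank of an orthant contained in it. -/
noncomputable def orthRank {N : ℕ} (S : Set (Fin N → ℤ)) : ℕ :=
  sSup {k | ∃ L, IsOrthantOfRank L k ∧ L ⊆ S}

/-- Commensurability: the intersection is nonempty and has the same rank as both sets. -/
def Commensurable {N : ℕ} (L L' : Set (Fin N → ℤ)) : Prop :=
  (L ∩ L').Nonempty ∧ orthRank L = orthRank (L ∩ L') ∧ orthRank L' = orthRank (L ∩ L')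

/-- The rank-`k` orthants contained in `S`. -/
def germSet {N : ℕ} (S : Set (Fin N → ℤ)) (k : ℕ) : Set (Set (Fin N → ℤ)) :=
  {L | IsOrthantOfRank L k ∧ L ⊆ S}

/-- The rank-`k` germs of `S`: commensurability classes of rank-`k` orthants of `S`. -/
def Germ {N : ℕ} (S : Set (Fin N → ℤ)) (k : ℕ) : Type _ :=
  Quot (fun L L' : germSet S k => Commensurable L.1 L'.1)

def germOf {N : ℕ} (S : Set (Fin N → ℤ)) (k : ℕ) (L : germSet S k) : Germ S k :=
  Quot.mk _ L

/-- The number of rank-`k` germs of `S` (as a natural number; `0` if infinite). -/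
noncomputable def heightAt {N : ℕ} (S : Set (Fin N → ℤ)) (k : ℕ) : ℕ :=
  Nat.card (Germ S k)

/-- The height of an orthohedral set: the number of germs of maximal rank. -/
noncomputable def height {N : ℕ} (S : Set (Fin N → ℤ)) : ℕ :=
  heightAt S (orthRank S)

/-- `f` is (the restriction of) an isometry of `ℤ^N` on `L`. -/
def IsometricOn {N : ℕ} (f : (Fin N → ℤ) → (Fin N → ℤ)) (L : Set (Fin N → ℤ)) : Prop :=
  ∃ (a : Fin N → ℤ) (A : Matrix (Fin N) (Fin N) ℤ),
    IsOrthMat A ∧ ∀ x ∈ L, f x = a + A.mulVec x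

/-- `f` is (the restriction of) a translation on `L`. -/
def TranslationOn {N : ℕ} (f : (Fin N → ℤ) → (Fin N → ℤ)) (L : Set (Fin N → ℤ)) : Prop :=
  ∃ a : Fin N → ℤ, ∀ x ∈ L, f x = a + x

/-- `f` is a piecewise-Euclidean-isometric map on `S`. -/
def IsPeiMapOn {N : ℕ} (S : Set (Fin N → ℤ)) (f : (Fin N → ℤ) → (Fin N → ℤ)) : Prop :=
  ∃ 𝓛 : Set (Set (Fin N → ℤ)), 𝓛.Finite ∧ (∀ L ∈ 𝓛, IsOrthant L) ∧
    S = ⋃₀ 𝓛 ∧ 𝓛.PairwiseDisjoint id ∧ ∀ L ∈ 𝓛, IsometricOn f L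

/-- `f` is a piecewise-Euclidean-translation map on `S`. -/
def IsPetMapOn {N : ℕ} (S : Set (Fin N → ℤ)) (f : (Fin N → ℤ) → (Fin N → ℤ)) : Prop :=
  ∃ 𝓛 : Set (Set (Fin N → ℤ)), 𝓛.Finite ∧ (∀ L ∈ 𝓛, IsOrthant L) ∧
    S = ⋃₀ 𝓛 ∧ 𝓛.PairwiseDisjoint id ∧ ∀ L ∈ 𝓛, TranslationOn f L

def IsPeiIso {N : ℕ} (S S' : Set (Fin N → ℤ)) (f : (Fin N → ℤ) → (Fin N → ℤ)) : Prop :=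
  IsPeiMapOn S f ∧ Set.InjOn f S ∧ f '' S = S'

def PeiIsomorphic {N : ℕ} (S S' : Set (Fin N → ℤ)) : Prop := ∃ f, IsPeiIso S S' f

def IsPetIso {N : ℕ} (S S' : Set (Fin N → ℤ)) (f : (Fin N → ℤ) → (Fin N → ℤ)) : Prop :=
  IsPetMapOn S f ∧ Set.InjOn f S ∧ f '' S = S'

def PetIsomorphic {N : ℕ} (S S' : Set (Fin N → ℤ)) : Prop := ∃ f, IsPetIso S S' f

/-- A pei-permutation of `S`: a permutation of `ℤ^N` supported on `S` which is pei on `S`. -/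
def IsPeiPerm {N : ℕ} (S : Set (Fin N → ℤ)) (g : Equiv.Perm (Fin N → ℤ)) : Prop :=
  IsPeiMapOn S ⇑g ∧ ∀ x ∉ S, g x = x

/-- The element `g` has rank at most `k`: it is supported on an orthohedral set of rank `≤ k`. -/
def rankLE {N : ℕ} (g : Equiv.Perm (Fin N → ℤ)) (k : ℕ) : Prop :=
  ∃ T : Set (Fin N → ℤ), IsOrthohedral T ∧ orthRank T ≤ k ∧ ∀ x ∉ T, g x = x

/-- `g` fixes every rank-`k` germ of `S`. -/
def FixesGerm {N : ℕ} (S : Set (Fin N → ℤ)) (k : ℕ) (g : Equiv.Perm (Fin N → ℤ)) : Prop :=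
  ∀ L, IsOrthantOfRank L k → L ⊆ S →
    ∃ L', IsOrthantOfRank L' k ∧ L' ⊆ L ∧ Commensurable L L' ∧
      IsometricOn (⇑g) L' ∧ Commensurable (⇑g '' L') L

/-- `g` fixes every rank-`k` germ of `S` and acts on its tangent coset by a translation. -/
def TranslatesGerm {N : ℕ} (S : Set (Fin N → ℤ)) (k : ℕ) (g : Equiv.Perm (Fin N → ℤ)) : Prop :=
  ∀ L, IsOrthantOfRank L k → L ⊆ S →
    ∃ L' a, IsOrthantOfRank L' k ∧ L' ⊆ L ∧ Commensurable L L' ∧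
      (∀ x ∈ L', g x = a + x) ∧ Commensurable (⇑g '' L') L

/-- `σ` is the map induced by `g` on the rank-`k` germs of `S`. -/
def InducesGermMap {N : ℕ} (S : Set (Fin N → ℤ)) (k : ℕ) (g : Equiv.Perm (Fin N → ℤ))
    (σ : Germ S k → Germ S k) : Prop :=
  ∀ L : germSet S k, ∃ (L'' : Set (Fin N → ℤ)) (M : germSet S k),
    IsOrthantOfRank L'' k ∧ L'' ⊆ L.1 ∧ Commensurable L.1 L'' ∧
    M.1 = ⇑g '' L'' ∧ σ (germOf S k L) = germOf S k M

/-- A finitary permutation which is even (has sign `1` on a finite invariant subset). -/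
def IsEvenFinitary {α : Type*} (σ : Equiv.Perm α) : Prop :=
  ∃ (F : Finset α) (σF : Equiv.Perm F),
    (∀ a ∉ F, σ a = a) ∧ (∀ a : F, σ (a : α) = (σF a : α)) ∧
    @Equiv.Perm.sign F (Classical.decEq _) inferInstance σF = 1

/-- `g` induces an even finitary permutation on the rank-`k` germs of `S`. -/
def IsEvenOnGerms {N : ℕ} (S : Set (Fin N → ℤ)) (k : ℕ) (g : Equiv.Perm (Fin N → ℤ)) : Prop :=
  ∃ σ : Equiv.Perm (Germ S k), InducesGermMap S k g ⇑σ ∧ IsEvenFinitary σ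

/-- Ordering of germs (of arbitrary ranks): `p ≤ q` if they have representatives `L ⊆ L'`. -/
def germLE {N : ℕ} (S : Set (Fin N → ℤ)) (p q : Σ k, Germ S k) : Prop :=
  ∃ (L : germSet S p.1) (L' : germSet S q.1),
    germOf S p.1 L = p.2 ∧ germOf S q.1 L' = q.2 ∧ L.1 ⊆ L'.1

/-- A maximal germ of `S`. -/
def IsMaxGerm {N : ℕ} (S : Set (Fin N → ℤ)) (p : Σ k, Germ S k) : Prop :=
  ∀ q, germLE S p q → germLE S q p

/-- A `0`-based orthant. -/
def IsBasedOrthant {N : ℕ} (L0 : Set (Fin N → ℤ)) : Prop :=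
  ∃ (A : Matrix (Fin N) (Fin N) ℤ) (Y : Finset (Fin N)),
    IsOrthMat A ∧ L0 = (fun v => A.mulVec v) '' stdFace N Y

/-- Two (oriented) parallel orthants. -/
def ParallelOrthants {N : ℕ} (L L' : Set (Fin N → ℤ)) : Prop :=
  ∃ a : Fin N → ℤ, L' = a +ᵥ L

/-- The indicator image `S_τ` of `S`: the union of the `0`-based parallel translates of
the orthants contained in `S`. -/
def indicatorImage {N : ℕ} (S : Set (Fin N → ℤ)) : Set (Fin N → ℤ) :=
  ⋃₀ {L0 | IsBasedOrthant L0 ∧ ∃ a : Fin N → ℤ, (a +ᵥ L0) ⊆ S}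

/-- The height function `h_S`: the number of maximal germs of `S` whose indicator is `L0`. -/
noncomputable def hFun {N : ℕ} (S : Set (Fin N → ℤ)) (L0 : Set (Fin N → ℤ)) : ℕ :=
  Nat.card {p : Σ k, Germ S k //
    IsMaxGerm S p ∧ ∃ L : germSet S p.1, germOf S p.1 L = p.2 ∧ ∃ a : Fin N → ℤ, L.1 = a +ᵥ L0}

/-- `S` is quasi-normal: the maximal based orthants of `S_τ` are exactly the support of `h_S`. -/
def QuasiNormal {N : ℕ} (S : Set (Fin N → ℤ)) : Prop :=
  ∀ L0 : Set (Fin N → ℤ),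
    (IsBasedOrthant L0 ∧ L0 ⊆ indicatorImage S ∧
      ∀ L1, IsBasedOrthant L1 → L1 ⊆ indicatorImage S → L0 ⊆ L1 → L1 ⊆ L0)
    ↔ (IsBasedOrthant L0 ∧ 0 < hFun S L0)

/-- The germ `q` of `S'` is the image of the germ `p` of `S` under the injective pei-map `f`. -/
def GermMapsTo {N : ℕ} (f : (Fin N → ℤ) → (Fin N → ℤ)) (S S' : Set (Fin N → ℤ))
    (p : Σ k, Germ S k) (q : Σ k, Germ S' k) : Prop :=
  p.1 = q.1 ∧ ∃ (L : germSet S p.1) (L'' : Set (Fin N → ℤ)) (M : germSet S' q.1),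
    germOf S p.1 L = p.2 ∧ IsOrthantOfRank L'' p.1 ∧ L'' ⊆ L.1 ∧ Commensurable L.1 L'' ∧
    M.1 = f '' L'' ∧ germOf S' q.1 M = q.2

/-- A stack of `h` parallel rank-`n` orthants. -/
def IsStack {N : ℕ} (S : Set (Fin N → ℤ)) (n h : ℕ) : Prop :=
  ∃ (L0 : Set (Fin N → ℤ)) (a : Fin h → (Fin N → ℤ)),
    IsOrthantOfRank L0 n ∧
    (Pairwise fun i j => Disjoint (a i +ᵥ L0) (a j +ᵥ L0)) ∧
    S = ⋃ i, a i +ᵥ L0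

/-- A coordinate half-space of `ℤ^N`. -/
def IsHalfSpace {N : ℕ} (H : Set (Fin N → ℤ)) : Prop :=
  ∃ (i : Fin N) (c : ℤ), H = {x | x i ≤ c} ∨ H = {x | c ≤ x i}

/-- The canonical embedding `ℤ^N → ℤ^{N+1}`. -/
def emb (N : ℕ) (x : Fin N → ℤ) : Fin (N + 1) → ℤ :=
  fun i => if h : (i : ℕ) < N then x ⟨i, h⟩ else 0

/-- The sum of all matrix entries of a finitely supported family of vectors. -/
noncomputable def totalSum (k : ℕ) (Γ : Type*) : (Γ →₀ (Fin k → ℤ)) →+ ℤ :=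
  Finsupp.liftAddHom (fun _ => ∑ i : Fin k, Pi.evalAddMonoidHom (fun _ => ℤ) i)

/-- The clique (flag) complex of a graph. -/
def cliqueComplex {V : Type*} (G : SimpleGraph V) : Set (Finset V) :=
  {s | s.Nonempty ∧ G.IsClique (s : Set V)}

/-- The geometric realization of a simplicial complex on vertex set `V`. -/
def realization {V : Type*} (K : Set (Finset V)) : Set (V → ℝ) :=
  {f | (∀ v, 0 ≤ f v) ∧ ∃ s ∈ K, Function.support f ⊆ ↑s ∧ ∑ v ∈ s, f v = 1}

/-- A wedge (bouquet) of `n`-spheres indexed by `ι`, with basepoint `b`. -/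
noncomputable def wedgeSpheres (ι : Type) (n : ℕ)
    (b : Metric.sphere (0 : EuclideanSpace ℝ (Fin (n + 1))) 1) : Type :=
  Quot (fun p q : Unit ⊕ (ι × Metric.sphere (0 : EuclideanSpace ℝ (Fin (n + 1))) 1) =>
    (Sum.elim (fun _ => True) (fun pr => pr.2 = b) p) ∧
    (Sum.elim (fun _ => True) (fun qr => qr.2 = b) q))

noncomputable instance (ι : Type) (n : ℕ) (b : Metric.sphere (0 : EuclideanSpace ℝ (Fin (n + 1))) 1) :
    TopologicalSpace (wedgeSpheres ι n b) :=
  letI : TopologicalSpace ι := ⊥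
  instTopologicalSpaceQuot



section Aux

variable {N : ℕ}

/-- Explicit coordinate form of an orthant. -/
def OSet (a : Fin N → ℤ) (Y : Finset (Fin N)) (ε : Fin N → ℤ) : Set (Fin N → ℤ) :=
  {x | (∀ i ∈ Y, 0 ≤ ε i * (x i - a i)) ∧ ∀ i ∉ Y, x i = a i}

/-- A sign vector. -/
def Sgn {n : ℕ} (ε : Fin n → ℤ) : Prop := ∀ i, ε i = 1 ∨ ε i = -1

lemma Sgn.mul_self {ε : Fin N → ℤ} (h : Sgn ε) (i : Fin N) : ε i * ε i = 1 := by
  rcases h i with h | h <;> rw [h] <;> ring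

lemma self_mem_oSet (a : Fin N → ℤ) (Y : Finset (Fin N)) (ε : Fin N → ℤ) :
    a ∈ OSet a Y ε := ⟨fun i _ => by simp, fun i _ => rfl⟩

lemma oSet_congr (a : Fin N → ℤ) (Y : Finset (Fin N)) {ε ε' : Fin N → ℤ}
    (h : ∀ i ∈ Y, ε i = ε' i) : OSet a Y ε = OSet a Y ε' := by
  ext x
  constructor <;> rintro ⟨h1, h2⟩ <;> refine ⟨fun i hi => ?_, h2⟩
  · rw [← h i hi]; exact h1 i hi
  · rw [h i hi]; exact h1 i hi

lemma oSet_subset_of_mem {a b : Fin N → ℤ} {Y : Finset (Fin N)} {ε : Fin N → ℤ}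
    (hb : b ∈ OSet a Y ε) : OSet b Y ε ⊆ OSet a Y ε := by
  rintro x ⟨h1, h2⟩
  refine ⟨fun i hi => ?_, fun i hi => ?_⟩
  · have e1 := h1 i hi
    have e2 := hb.1 i hi
    nlinarith [e1, e2]
  · rw [h2 i hi, hb.2 i hi]

/-- The normal form characterization of orthants of rank `k`. -/
lemma isOrthantOfRank_iff {L : Set (Fin N → ℤ)} {k : ℕ} :
    IsOrthantOfRank L k ↔ ∃ a Y ε, Sgn ε ∧ Y.card = k ∧ L = OSet a Y ε := by
  have himg : ∀ (a : Fin N → ℤ) (A : Matrix (Fin N) (Fin N) ℤ) (Y : Finset (Fin N))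
      (x : Fin N → ℤ), x ∈ (fun v => a + A.mulVec v) '' stdFace N Y ↔
      ∃ v, ((∀ i, 0 ≤ v i) ∧ ∀ i ∉ Y, v i = 0) ∧ x = a + A.mulVec v := by
    intro a A Y x
    constructor
    · rintro ⟨v, hv, h⟩; exact ⟨v, hv, h.symm⟩
    · rintro ⟨v, hv, h⟩; exact ⟨v, hv, h.symm⟩
  constructor
  · rintro ⟨a, A, Y, hA, hY, rfl⟩
    have happ : ∀ i i', (∑ j, A i j * A i' j) = (1 : Matrix (Fin N) (Fin N) ℤ) i i' := by
      intro i i'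
      have := congrFun (congrFun hA i) i'
      simpa [Matrix.mul_apply, Matrix.transpose_apply] using this
    have hdiag : ∀ i, (∑ j, A i j * A i j) = 1 := by
      intro i; rw [happ i i, Matrix.one_apply_eq]
    have hcross : ∀ i i', i ≠ i' → (∑ j, A i j * A i' j) = 0 := by
      intro i i' hne; rw [happ i i', Matrix.one_apply_ne hne]
    have hrow : ∀ i, ∃ j0, (A i j0 = 1 ∨ A i j0 = -1) ∧ ∀ j, j ≠ j0 → A i j = 0 := by
      intro i
      have h1 := hdiag i
      have hex : ∃ j, A i j ≠ 0 := by
        by_contra hc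
        push_neg at hc
        simp [hc] at h1
      obtain ⟨j0, hj0⟩ := hex
      have hge : 1 ≤ A i j0 * A i j0 := by
        rcases lt_or_gt_of_ne hj0 with h | h <;> nlinarith
      have hsplit : A i j0 * A i j0 + ∑ j ∈ Finset.univ.erase j0, A i j * A i j = 1 := by
        rw [Finset.add_sum_erase _ (fun j => A i j * A i j) (Finset.mem_univ j0)]
        exact h1
      have hnn : ∀ j ∈ Finset.univ.erase j0, 0 ≤ A i j * A i j :=
        fun j _ => mul_self_nonneg _
      have hrest : ∑ j ∈ Finset.univ.erase j0, A i j * A i j = 0 := by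
        have := Finset.sum_nonneg hnn
        omega
      have hzero := (Finset.sum_eq_zero_iff_of_nonneg hnn).1 hrest
      refine ⟨j0, ?_, fun j hj => ?_⟩
      · rw [← mul_self_eq_one_iff]; omega
      · have := hzero j (Finset.mem_erase.2 ⟨hj, Finset.mem_univ j⟩)
        exact mul_self_eq_zero.1 this
    choose p hp1 hp2 using hrow
    have hpinj : Function.Injective p := by
      intro i i' he
      by_contra hne
      have h0 := hcross i i' hne
      rw [Finset.sum_eq_single (p i) (fun j _ hj => by rw [hp2 i j hj, zero_mul])
        (fun h => absurd (Finset.mem_univ _) h)] at h0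
      have hii := hp1 i
      rw [he] at h0 hii
      rcases hii with h | h <;> rcases hp1 i' with h' | h' <;> rw [h, h'] at h0 <;> omega
    have hpbij : Function.Bijective p := Finite.injective_iff_bijective.1 hpinj
    let e := Equiv.ofBijective p hpbij
    have hpe : ∀ y, p (e.symm y) = y := fun y => e.apply_symm_apply y
    have hpe2 : ∀ i, e.symm (p i) = i := fun i => e.symm_apply_apply i
    have hmul : ∀ (v : Fin N → ℤ) i, A.mulVec v i = A i (p i) * v (p i) := by
      intro v i
      rw [Matrix.mulVec, dotProduct]
      exact Finset.sum_eq_single (p i) (fun j _ hj => by rw [hp2 i j hj, zero_mul])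
        (fun h => absurd (Finset.mem_univ _) h)
    have hsq : ∀ i, A i (p i) * A i (p i) = 1 := by
      intro i; rw [mul_self_eq_one_iff]; exact hp1 i
    refine ⟨a, Finset.univ.filter (fun i => p i ∈ Y), fun i => A i (p i), hp1, ?_, ?_⟩
    · rw [← hY]
      exact Finset.card_bij (fun i _ => p i)
        (fun i hi => (Finset.mem_filter.1 hi).2)
        (fun i _ i' _ h => hpinj h)
        (fun y hy => ⟨e.symm y, Finset.mem_filter.2 ⟨Finset.mem_univ _, by
          rw [hpe y]; exact hy⟩, hpe y⟩)
    · ext x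
      rw [himg]
      constructor
      · rintro ⟨v, ⟨hv0, hvY⟩, hx⟩
        have hxi : ∀ i, x i = a i + A i (p i) * v (p i) := by
          intro i; rw [congrFun hx i, Pi.add_apply, hmul]
        refine ⟨fun i hi => ?_, fun i hi => ?_⟩
        · show 0 ≤ A i (p i) * (x i - a i)
          have : x i - a i = A i (p i) * v (p i) := by rw [hxi i]; ring
          rw [this, ← mul_assoc, hsq i, one_mul]
          exact hv0 (p i)
        · show x i = a i
          rw [Finset.mem_filter, not_and] at hi
          have hpi : p i ∉ Y := hi (Finset.mem_univ i)
          rw [hxi i, hvY (p i) hpi, mul_zero, add_zero]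
      · rintro ⟨hx1, hx2⟩
        refine ⟨fun j => A (e.symm j) (p (e.symm j)) * (x (e.symm j) - a (e.symm j)),
          ⟨fun j => ?_, fun j hj => ?_⟩, ?_⟩
        · show 0 ≤ A (e.symm j) (p (e.symm j)) * (x (e.symm j) - a (e.symm j))
          by_cases hmem : e.symm j ∈ Finset.univ.filter (fun i => p i ∈ Y)
          · exact hx1 _ hmem
          · have hx0 : x (e.symm j) = a (e.symm j) := hx2 _ hmem
            rw [hx0, sub_self, mul_zero]
        · show A (e.symm j) (p (e.symm j)) * (x (e.symm j) - a (e.symm j)) = 0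
          have hmem : e.symm j ∉ Finset.univ.filter (fun i => p i ∈ Y) := by
            rw [Finset.mem_filter, not_and]
            intro _ hc
            rw [hpe j] at hc
            exact hj hc
          rw [hx2 _ hmem, sub_self, mul_zero]
        · funext i
          rw [Pi.add_apply, hmul, hpe2 i, ← mul_assoc, hsq i, one_mul]
          ring
  · rintro ⟨a, Y, ε, hε, hY, rfl⟩
    refine ⟨a, Matrix.diagonal ε, Y, ?_, hY, ?_⟩
    · show Matrix.diagonal ε * (Matrix.diagonal ε).transpose = 1
      rw [Matrix.diagonal_transpose, Matrix.diagonal_mul_diagonal]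
      have : (fun i => ε i * ε i) = fun _ : Fin N => (1 : ℤ) := funext hε.mul_self
      rw [this, Matrix.diagonal_one]
    · ext x
      rw [himg]
      constructor
      · rintro ⟨hx1, hx2⟩
        refine ⟨fun i => ε i * (x i - a i), ⟨fun i => ?_, fun i hi => ?_⟩, ?_⟩
        · show 0 ≤ ε i * (x i - a i)
          by_cases hi : i ∈ Y
          · exact hx1 i hi
          · rw [hx2 i hi, sub_self, mul_zero]
        · show ε i * (x i - a i) = 0
          rw [hx2 i hi, sub_self, mul_zero]
        · funext i
          rw [Pi.add_apply, Matrix.mulVec_diagonal, ← mul_assoc, hε.mul_self, one_mul]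
          ring
      · rintro ⟨v, ⟨hv0, hvY⟩, hx⟩
        have hxi : ∀ i, x i = a i + ε i * v i := by
          intro i; rw [congrFun hx i, Pi.add_apply, Matrix.mulVec_diagonal]
        refine ⟨fun i hi => ?_, fun i hi => ?_⟩
        · have : x i - a i = ε i * v i := by rw [hxi i]; ring
          rw [this, ← mul_assoc, hε.mul_self, one_mul]
          exact hv0 i
        · rw [hxi i, hvY i hi, mul_zero, add_zero]


lemma oSet_singleton (a : Fin N → ℤ) : OSet a (∅ : Finset (Fin N)) (fun _ => 1) = {a} := by
  ext x
  constructor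
  · rintro ⟨_, h2⟩
    exact funext fun i => h2 i (Finset.notMem_empty i)
  · rintro rfl
    exact self_mem_oSet _ _ _

lemma isOrthantOfRank_singleton (a : Fin N → ℤ) : IsOrthantOfRank {a} 0 :=
  isOrthantOfRank_iff.2 ⟨a, ∅, fun _ => 1, fun _ => Or.inl rfl, Finset.card_empty,
    (oSet_singleton a).symm⟩

lemma orthant_nonempty {L : Set (Fin N → ℤ)} {k : ℕ} (h : IsOrthantOfRank L k) :
    L.Nonempty := by
  obtain ⟨a, Y, ε, hε, hY, rfl⟩ := isOrthantOfRank_iff.1 h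
  exact ⟨a, self_mem_oSet a Y ε⟩

/-- Structure of a sub-orthant in coordinates. -/
lemma oSet_sub_structure {a b : Fin N → ℤ} {Y Z : Finset (Fin N)} {ε δ : Fin N → ℤ}
    (hε : Sgn ε) (hδ : Sgn δ) (hsub : OSet b Z δ ⊆ OSet a Y ε) :
    Z ⊆ Y ∧ (∀ i ∈ Z, δ i = ε i) ∧ b ∈ OSet a Y ε := by
  have hb : b ∈ OSet a Y ε := hsub (self_mem_oSet b Z δ)
  have hray : ∀ i ∈ Z, ∀ t : ℤ, 0 ≤ t →
      Function.update b i (b i + δ i * t) ∈ OSet b Z δ := by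
    intro i hi t ht
    refine ⟨fun j hj => ?_, fun j hj => ?_⟩
    · by_cases hji : j = i
      · subst hji
        rw [Function.update_self]
        have : δ j * (b j + δ j * t - b j) = (δ j * δ j) * t := by ring
        rw [this, hδ.mul_self, one_mul]
        exact ht
      · rw [Function.update_of_ne hji, sub_self, mul_zero]
    · have hji : j ≠ i := fun h => hj (h ▸ hi)
      rw [Function.update_of_ne hji]
  have hZY : ∀ i ∈ Z, i ∈ Y := by
    intro i hi
    by_contra hiY
    have h0 := (hsub (hray i hi 0 le_rfl)).2 i hiY
    have h1 := (hsub (hray i hi 1 zero_le_one)).2 i hiY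
    rw [Function.update_self] at h0 h1
    rcases hδ i with h | h <;> rw [h] at h0 h1 <;> omega
  refine ⟨fun i hi => hZY i hi, fun i hi => ?_, hb⟩
  by_contra hne
  have hopp : ε i * δ i = -1 := by
    rcases hε i with h | h <;> rcases hδ i with h' | h'
    · exact absurd (h'.trans h.symm) hne
    · rw [h, h']; ring
    · rw [h, h']; ring
    · exact absurd (h'.trans h.symm) hne
  set t : ℤ := max 0 (ε i * (b i - a i) + 1) with hT
  have ht0 : 0 ≤ t := le_max_left _ _
  have ht1 : ε i * (b i - a i) + 1 ≤ t := le_max_right _ _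
  have hmem := hsub (hray i hi t ht0)
  have hiY := hZY i hi
  have := hmem.1 i hiY
  rw [Function.update_self] at this
  have hcalc : ε i * (b i + δ i * t - a i) = ε i * (b i - a i) + (ε i * δ i) * t := by ring
  rw [hcalc, hopp] at this
  linarith

lemma oSet_rank_mono {L M : Set (Fin N → ℤ)} {j k : ℕ}
    (hM : IsOrthantOfRank M j) (hL : IsOrthantOfRank L k) (hsub : M ⊆ L) : j ≤ k := by
  obtain ⟨a, Y, ε, hε, hY, rfl⟩ := isOrthantOfRank_iff.1 hL
  obtain ⟨b, Z, δ, hδ, hZ, rfl⟩ := isOrthantOfRank_iff.1 hM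
  have := (oSet_sub_structure hε hδ hsub).1
  rw [← hY, ← hZ]
  exact Finset.card_le_card this

lemma rank_le_N {L : Set (Fin N → ℤ)} {k : ℕ} (h : IsOrthantOfRank L k) : k ≤ N := by
  obtain ⟨a, A, Y, hA, hY, rfl⟩ := h
  rw [← hY]
  simpa using Finset.card_le_univ Y

lemma bddAbove_rankSet (S : Set (Fin N → ℤ)) :
    BddAbove {k | ∃ L, IsOrthantOfRank L k ∧ L ⊆ S} := by
  refine ⟨N, fun k hk => ?_⟩
  obtain ⟨L, hL, _⟩ := hk
  exact rank_le_N hL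

lemma le_orthRank {S L : Set (Fin N → ℤ)} {k : ℕ} (hL : IsOrthantOfRank L k)
    (hsub : L ⊆ S) : k ≤ orthRank S :=
  le_csSup (bddAbove_rankSet S) ⟨L, hL, hsub⟩

lemma orthRank_orthant {L : Set (Fin N → ℤ)} {n : ℕ} (hL : IsOrthantOfRank L n) :
    orthRank L = n := by
  refine le_antisymm (csSup_le ⟨n, L, hL, le_rfl⟩ ?_) (le_orthRank hL le_rfl)
  rintro k ⟨M, hM, hsub⟩
  exact oSet_rank_mono hM hL hsub

lemma exists_orthant_orthRank {T : Set (Fin N → ℤ)} (hT : T.Nonempty) :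
    ∃ L, IsOrthantOfRank L (orthRank T) ∧ L ⊆ T := by
  obtain ⟨x, hx⟩ := hT
  have hne : {k | ∃ L, IsOrthantOfRank L k ∧ L ⊆ T}.Nonempty :=
    ⟨0, {x}, isOrthantOfRank_singleton x, Set.singleton_subset_iff.2 hx⟩
  exact Nat.sSup_mem hne (bddAbove_rankSet T)

lemma comm_symm {L M : Set (Fin N → ℤ)} (h : Commensurable L M) : Commensurable M L := by
  obtain ⟨h1, h2, h3⟩ := h
  rw [Set.inter_comm] at h1 h2 h3
  exact ⟨h1, h3, h2⟩

/-- If two rank-`n` orthants have a common rank-`n` sub-orthant, they are commensurable. -/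
lemma comm_of_common {L M V : Set (Fin N → ℤ)} {n : ℕ} (hL : IsOrthantOfRank L n)
    (hM : IsOrthantOfRank M n) (hV : IsOrthantOfRank V n) (hsub : V ⊆ L ∩ M) :
    Commensurable L M := by
  have hne : (L ∩ M).Nonempty := (orthant_nonempty hV).mono hsub
  have hrk : orthRank (L ∩ M) = n := by
    refine le_antisymm (csSup_le ⟨n, V, hV, hsub⟩ ?_) (le_orthRank hV hsub)
    rintro k ⟨P, hP, hPsub⟩
    exact oSet_rank_mono hP hL (hPsub.trans Set.inter_subset_left)
  exact ⟨hne, by rw [orthRank_orthant hL, hrk], by rw [orthRank_orthant hM, hrk]⟩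

lemma comm_of_sub {L M : Set (Fin N → ℤ)} {n : ℕ} (hL : IsOrthantOfRank L n)
    (hM : IsOrthantOfRank M n) (hsub : M ⊆ L) : Commensurable L M :=
  comm_of_common hL hM hM (Set.subset_inter hsub le_rfl)

/-- Two full-rank sub-orthants of a rank-`n` orthant share a full-rank sub-orthant. -/
lemma sub_meet {L M₁ M₂ : Set (Fin N → ℤ)} {n : ℕ} (hL : IsOrthantOfRank L n)
    (hM₁ : IsOrthantOfRank M₁ n) (hM₂ : IsOrthantOfRank M₂ n)
    (h1 : M₁ ⊆ L) (h2 : M₂ ⊆ L) :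
    ∃ V, IsOrthantOfRank V n ∧ V ⊆ M₁ ∩ M₂ := by
  obtain ⟨a, Y, ε, hε, hY, rfl⟩ := isOrthantOfRank_iff.1 hL
  obtain ⟨b, Z₁, δ₁, hδ₁, hZ₁, rfl⟩ := isOrthantOfRank_iff.1 hM₁
  obtain ⟨c, Z₂, δ₂, hδ₂, hZ₂, rfl⟩ := isOrthantOfRank_iff.1 hM₂
  obtain ⟨hZY₁, hδε₁, hbmem⟩ := oSet_sub_structure hε hδ₁ h1
  obtain ⟨hZY₂, hδε₂, hcmem⟩ := oSet_sub_structure hε hδ₂ h2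
  have hZ₁Y : Z₁ = Y := Finset.eq_of_subset_of_card_le hZY₁ (by omega)
  have hZ₂Y : Z₂ = Y := Finset.eq_of_subset_of_card_le hZY₂ (by omega)
  have e1 : OSet b Z₁ δ₁ = OSet b Y ε := by rw [← hZ₁Y]; exact oSet_congr b Z₁ hδε₁
  have e2 : OSet c Z₂ δ₂ = OSet c Y ε := by rw [← hZ₂Y]; exact oSet_congr c Z₂ hδε₂
  rw [e1, e2]
  set d : Fin N → ℤ := fun i =>
    if i ∈ Y then ε i * max (ε i * b i) (ε i * c i) else b i with hd
  have hbc : ∀ i ∉ Y, b i = c i := by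
    intro i hi
    rw [hbmem.2 i hi, hcmem.2 i hi]
  have hdb : d ∈ OSet b Y ε := by
    refine ⟨fun i hi => ?_, fun i hi => ?_⟩
    · have : d i = ε i * max (ε i * b i) (ε i * c i) := by rw [hd]; simp [hi]
      rw [this]
      have hexp : ε i * (ε i * max (ε i * b i) (ε i * c i) - b i)
          = (ε i * ε i) * max (ε i * b i) (ε i * c i) - ε i * b i := by ring
      rw [hexp, hε.mul_self, one_mul]
      have := le_max_left (ε i * b i) (ε i * c i)
      linarith
    · rw [hd]; simp [hi]
  have hdc : d ∈ OSet c Y ε := by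
    refine ⟨fun i hi => ?_, fun i hi => ?_⟩
    · have : d i = ε i * max (ε i * b i) (ε i * c i) := by rw [hd]; simp [hi]
      rw [this]
      have hexp : ε i * (ε i * max (ε i * b i) (ε i * c i) - c i)
          = (ε i * ε i) * max (ε i * b i) (ε i * c i) - ε i * c i := by ring
      rw [hexp, hε.mul_self, one_mul]
      have := le_max_right (ε i * b i) (ε i * c i)
      linarith
    · have : d i = b i := by rw [hd]; simp [hi]
      rw [this, hbc i hi]
  refine ⟨OSet d Y ε, isOrthantOfRank_iff.2 ⟨d, Y, ε, hε, hY, rfl⟩,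
    Set.subset_inter (oSet_subset_of_mem hdb) (oSet_subset_of_mem hdc)⟩


/-- Covering lemma: a rank-`k` orthant covered by finitely many orthants has a full-rank
parallel sub-orthant inside one of them. -/
lemma cover_aux {Y : Finset (Fin N)} {ε : Fin N → ℤ} (hε : Sgn ε)
    (𝓟 : Finset (Set (Fin N → ℤ))) :
    (∀ P ∈ 𝓟, ∃ b Z δ, Sgn δ ∧ P = OSet b Z δ) →
    ∀ a : Fin N → ℤ, OSet a Y ε ⊆ ⋃₀ ↑𝓟 →
      ∃ P ∈ 𝓟, ∃ d, OSet d Y ε ⊆ OSet a Y ε ∩ P := by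
  classical
  induction 𝓟 using Finset.induction_on with
  | empty =>
    intro _ a ha
    exact absurd (ha (self_mem_oSet a Y ε)) (by simp)
  | @insert P₀ s hP₀s ih =>
    intro h𝓟 a ha
    obtain ⟨b, Z, δ, hδ, hP₀eq⟩ := h𝓟 P₀ (Finset.mem_insert_self _ _)
    subst hP₀eq
    -- continuation: if we can separate a sub-orthant from P₀, recurse.
    have hcont : ∀ a', a' ∈ OSet a Y ε → (∀ x ∈ OSet a' Y ε, x ∉ OSet b Z δ) →
        ∃ P ∈ insert (OSet b Z δ) s, ∃ d, OSet d Y ε ⊆ OSet a Y ε ∩ P := by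
      intro a' ha' hdisj
      have hsub' : OSet a' Y ε ⊆ ⋃₀ ↑s := by
        intro x hx
        have hx2 : x ∈ ⋃₀ ↑(insert (OSet b Z δ) s) := ha (oSet_subset_of_mem ha' hx)
        rw [Finset.coe_insert, Set.sUnion_insert] at hx2
        rcases hx2 with h | h
        · exact absurd h (hdisj x hx)
        · exact h
      obtain ⟨P, hPs, d, hd⟩ := ih (fun P hP => h𝓟 P (Finset.mem_insert_of_mem hP)) a' hsub'
      exact ⟨P, Finset.mem_insert_of_mem hPs, d,
        hd.trans (Set.inter_subset_inter (oSet_subset_of_mem ha') (le_refl _))⟩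
    -- separation helper, for a coordinate of `Y` on which `P₀` is bounded above.
    have hsep : ∀ i ∈ Y, (∀ x ∈ OSet b Z δ, ε i * x i ≤ ε i * b i) →
        ∃ a', a' ∈ OSet a Y ε ∧ ∀ x ∈ OSet a' Y ε, x ∉ OSet b Z δ := by
      intro i hiY hbd
      refine ⟨Function.update a i (ε i * (1 + max (ε i * a i) (ε i * b i))), ⟨?_, ?_⟩, ?_⟩
      · intro j hj
        by_cases hji : j = i
        · subst hji
          rw [Function.update_self]
          have hexp : ε j * (ε j * (1 + max (ε j * a j) (ε j * b j)) - a j)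
              = (ε j * ε j) * (1 + max (ε j * a j) (ε j * b j)) - ε j * a j := by ring
          rw [hexp, hε.mul_self, one_mul]
          have := le_max_left (ε j * a j) (ε j * b j)
          linarith
        · rw [Function.update_of_ne hji, sub_self, mul_zero]
      · intro j hj
        have hji : j ≠ i := fun h => hj (h ▸ hiY)
        rw [Function.update_of_ne hji]
      · intro x hx hxP
        have h1 := hx.1 i hiY
        rw [Function.update_self] at h1
        have hexp : ε i * (x i - ε i * (1 + max (ε i * a i) (ε i * b i)))
            = ε i * x i - (ε i * ε i) * (1 + max (ε i * a i) (ε i * b i)) := by ring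
        rw [hexp, hε.mul_self, one_mul] at h1
        have h2 := hbd x hxP
        have h3 := le_max_right (ε i * a i) (ε i * b i)
        linarith
    by_cases hc1 : Y ⊆ Z
    · by_cases hc2 : ∀ i ∈ Y, δ i = ε i
      · by_cases hc3 : ∀ i ∉ Y, (i ∈ Z → 0 ≤ δ i * (a i - b i)) ∧ (i ∉ Z → a i = b i)
        · -- aligned case: direct construction
          set d : Fin N → ℤ := fun i =>
            if i ∈ Y then ε i * max (ε i * a i) (ε i * b i) else a i with hd
          refine ⟨OSet b Z δ, Finset.mem_insert_self _ _, d, ?_⟩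
          have hda : d ∈ OSet a Y ε := by
            refine ⟨fun i hi => ?_, fun i hi => ?_⟩
            · have hdi : d i = ε i * max (ε i * a i) (ε i * b i) := by rw [hd]; simp [hi]
              rw [hdi]
              have hexp : ε i * (ε i * max (ε i * a i) (ε i * b i) - a i)
                  = (ε i * ε i) * max (ε i * a i) (ε i * b i) - ε i * a i := by ring
              rw [hexp, hε.mul_self, one_mul]
              have := le_max_left (ε i * a i) (ε i * b i)
              linarith
            · rw [hd]; simp [hi]
          refine Set.subset_inter (oSet_subset_of_mem hda) ?_
          rintro x ⟨hx1, hx2⟩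
          refine ⟨fun j hj => ?_, fun j hj => ?_⟩
          · by_cases hjY : j ∈ Y
            · have hδj : δ j = ε j := hc2 j hjY
              have hxd := hx1 j hjY
              have hdj : d j = ε j * max (ε j * a j) (ε j * b j) := by rw [hd]; simp [hjY]
              rw [hdj] at hxd
              have hexp : ε j * (x j - ε j * max (ε j * a j) (ε j * b j))
                  = ε j * x j - (ε j * ε j) * max (ε j * a j) (ε j * b j) := by ring
              rw [hexp, hε.mul_self, one_mul] at hxd
              have h2 := le_max_right (ε j * a j) (ε j * b j)
              rw [hδj]
              have hexp2 : ε j * (x j - b j) = ε j * x j - ε j * b j := by ring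
              rw [hexp2]
              linarith
            · have hxj : x j = a j := by
                have := hx2 j hjY
                rw [this, hd]
                simp [hjY]
              rw [hxj]
              exact (hc3 j hjY).1 hj
          · have hjY : j ∉ Y := fun h => hj (hc1 h)
            have hxj : x j = a j := by
              have := hx2 j hjY
              rw [this, hd]
              simp [hjY]
            rw [hxj]
            exact (hc3 j hjY).2 hj
        · -- a coordinate off `Y` fails: `L` misses `P₀` entirely
          push_neg at hc3
          obtain ⟨i, hiY, hni⟩ := hc3
          refine hcont a (self_mem_oSet a Y ε) ?_
          intro x hx hxP
          have hxi : x i = a i := hx.2 i hiY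
          by_cases hiZ : i ∈ Z
          · by_cases hle : 0 ≤ δ i * (a i - b i)
            · exact absurd hiZ (hni (fun _ => hle)).1
            · have := hxP.1 i hiZ
              rw [hxi] at this
              omega
          · have hne := (hni (fun h => absurd h hiZ)).2
            have := hxP.2 i hiZ
            rw [hxi] at this
            exact hne this
      · -- sign mismatch on `Y`: `P₀` is bounded on that coordinate
        push_neg at hc2
        obtain ⟨i, hiY, hne⟩ := hc2
        have hiZ : i ∈ Z := hc1 hiY
        have hopp : δ i = -ε i := by
          rcases hε i with h | h <;> rcases hδ i with h' | h' <;> rw [h, h'] <;> rw [h, h'] at hne <;>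
            simp at hne ⊢
        obtain ⟨a', ha', hdisj⟩ := hsep i hiY (by
          intro x hxP
          have := hxP.1 i hiZ
          rw [hopp] at this
          nlinarith)
        exact hcont a' ha' hdisj
    · -- a coordinate of `Y` is fixed on `P₀`
      obtain ⟨i, hiY, hiZ⟩ := Finset.not_subset.1 hc1
      obtain ⟨a', ha', hdisj⟩ := hsep i hiY (by
        intro x hxP
        rw [hxP.2 i hiZ])
      exact hcont a' ha' hdisj

lemma cover {L : Set (Fin N → ℤ)} {k : ℕ} (hL : IsOrthantOfRank L k)
    (𝓟 : Finset (Set (Fin N → ℤ))) (h𝓟 : ∀ P ∈ 𝓟, IsOrthant P)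
    (hsub : L ⊆ ⋃₀ ↑𝓟) :
    ∃ P ∈ 𝓟, ∃ R, IsOrthantOfRank R k ∧ R ⊆ L ∧ R ⊆ P := by
  obtain ⟨a, Y, ε, hε, hY, rfl⟩ := isOrthantOfRank_iff.1 hL
  have h𝓟' : ∀ P ∈ 𝓟, ∃ b Z δ, Sgn δ ∧ P = OSet b Z δ := by
    intro P hP
    obtain ⟨k', hk'⟩ := h𝓟 P hP
    obtain ⟨b, Z, δ, hδ, _, hPe⟩ := isOrthantOfRank_iff.1 hk'
    exact ⟨b, Z, δ, hδ, hPe⟩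
  obtain ⟨P, hP, d, hd⟩ := cover_aux hε 𝓟 h𝓟' a hsub
  exact ⟨P, hP, OSet d Y ε, isOrthantOfRank_iff.2 ⟨d, Y, ε, hε, hY, rfl⟩,
    hd.trans Set.inter_subset_left, hd.trans Set.inter_subset_right⟩


/-- An orthohedral set has finitely many top-rank germs. -/
lemma germ_finite {S : Set (Fin N → ℤ)} (hS : IsOrthohedral S) :
    Finite (Germ S (orthRank S)) := by
  classical
  obtain ⟨𝓛, hfin, horth, hSeq⟩ := hS
  by_cases hne : Nonempty (Germ S (orthRank S))
  · set n := orthRank S with hn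
    set F := hfin.toFinset with hF
    have hFS : ∀ P ∈ F, P ⊆ S := by
      intro P hP
      rw [hSeq]
      exact Set.subset_sUnion_of_mem (hfin.mem_toFinset.1 hP)
    refine Finite.of_surjective (α := {P // P ∈ F}) (fun P =>
      if h : P.1 ∈ germSet S n then germOf S n ⟨P.1, h⟩ else Classical.choice hne) ?_
    intro q
    induction q using Quot.ind with
    | _ L =>
      obtain ⟨hLrank, hLsub⟩ := L.2
      have hsub : L.1 ⊆ ⋃₀ ↑F := by
        rw [hF, hfin.coe_toFinset, ← hSeq]
        exact hLsub
      obtain ⟨P, hPF, R, hR, hRL, hRP⟩ :=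
        cover hLrank F (fun P hP => horth P (hfin.mem_toFinset.1 hP)) hsub
      obtain ⟨kP, hkP⟩ := horth P (hfin.mem_toFinset.1 hPF)
      have hle1 : n ≤ kP := oSet_rank_mono hR hkP hRP
      have hle2 : kP ≤ n := le_orthRank hkP (hFS P hPF)
      have hkPn : kP = n := le_antisymm hle2 hle1
      rw [hkPn] at hkP
      have hPmem : P ∈ germSet S n := ⟨hkP, hFS P hPF⟩
      have hRmem : R ∈ germSet S n := ⟨hR, hRL.trans hLsub⟩
      refine ⟨⟨P, hPF⟩, ?_⟩
      show (if h : P ∈ germSet S n then germOf S n ⟨P, h⟩ else Classical.choice hne)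
          = Quot.mk (fun L L' : germSet S n => Commensurable L.1 L'.1) L
      rw [dif_pos hPmem]
      calc germOf S n ⟨P, hPmem⟩
          = germOf S n ⟨R, hRmem⟩ := Quot.sound (comm_of_sub hkP hR hRP)
        _ = germOf S n ⟨L.1, L.2⟩ := Quot.sound (comm_symm (comm_of_sub hLrank hR hRL))
  · have : IsEmpty (Germ S (orthRank S)) := not_nonempty_iff.1 hne
    exact Finite.of_subsingleton

open Classical in
/-- The component map on germs of a union. -/
noncomputable def psiFun (S S' : Set (Fin N → ℤ)) (n : ℕ)
    (hTot : ∀ L : germSet (S ∪ S') n,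
      (∃ R, IsOrthantOfRank R n ∧ R ⊆ L.1 ∧ R ⊆ S) ∨
      (∃ R, IsOrthantOfRank R n ∧ R ⊆ L.1 ∧ R ⊆ S'))
    (L : germSet (S ∪ S') n) : Germ S n ⊕ Germ S' n :=
  if h : ∃ R, IsOrthantOfRank R n ∧ R ⊆ L.1 ∧ R ⊆ S then
    Sum.inl (germOf S n ⟨h.choose, h.choose_spec.1, h.choose_spec.2.2⟩)
  else
    Sum.inr (germOf S' n ⟨((hTot L).resolve_left h).choose,
      ((hTot L).resolve_left h).choose_spec.1, ((hTot L).resolve_left h).choose_spec.2.2⟩)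

end Aux

/-- If `rk S = rk S' > rk (S ∩ S')` then `h(S ∪ S') = h(S) + h(S')`. -/
theorem stmt3 {N : ℕ} (S S' : Set (Fin N → ℤ)) (hS : IsOrthohedral S)
    (hS' : IsOrthohedral S') (h1 : orthRank S = orthRank S')
    (h2 : orthRank (S ∩ S') < orthRank S) :
    height (S ∪ S') = height S + height S' := by
  classical
  obtain ⟨𝓛, hLfin, hLorth, hSeq⟩ := id hS
  obtain ⟨𝓜, hMfin, hMorth, hS'eq⟩ := id hS'
  set n := orthRank S with hn
  have hnS' : orthRank S' = n := h1.symm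
  set F : Finset (Set (Fin N → ℤ)) := hLfin.toFinset ∪ hMfin.toFinset with hF
  have hForth : ∀ P ∈ F, IsOrthant P := by
    intro P hP
    rw [hF, Finset.mem_union] at hP
    rcases hP with h | h
    · exact hLorth P (hLfin.mem_toFinset.1 h)
    · exact hMorth P (hMfin.mem_toFinset.1 h)
  have hFsub : ∀ P ∈ F, P ⊆ S ∨ P ⊆ S' := by
    intro P hP
    rw [hF, Finset.mem_union] at hP
    rcases hP with h | h
    · exact Or.inl (hSeq ▸ Set.subset_sUnion_of_mem (hLfin.mem_toFinset.1 h))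
    · exact Or.inr (hS'eq ▸ Set.subset_sUnion_of_mem (hMfin.mem_toFinset.1 h))
  have hUeq : ⋃₀ ↑F = S ∪ S' := by
    rw [hF, Finset.coe_union, Set.sUnion_union, hLfin.coe_toFinset, hMfin.coe_toFinset,
      ← hSeq, ← hS'eq]
  have hkey : ∀ (k : ℕ) (L : Set (Fin N → ℤ)), IsOrthantOfRank L k → L ⊆ S ∪ S' →
      ∃ R, IsOrthantOfRank R k ∧ R ⊆ L ∧ (R ⊆ S ∨ R ⊆ S') := by
    intro k L hL hLsub
    obtain ⟨P, hPF, R, hR, hRL, hRP⟩ := cover hL F hForth (by rw [hUeq]; exact hLsub)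
    exact ⟨R, hR, hRL, (hFsub P hPF).imp (fun h => hRP.trans h) (fun h => hRP.trans h)⟩
  have hSne : {k | ∃ L, IsOrthantOfRank L k ∧ L ⊆ S}.Nonempty := by
    by_contra hc
    rw [Set.not_nonempty_iff_eq_empty] at hc
    have hz : n = 0 := by
      rw [hn, orthRank, hc, csSup_empty]
      rfl
    omega
  have hUincl : {k | ∃ L, IsOrthantOfRank L k ∧ L ⊆ S} ⊆
      {k | ∃ L, IsOrthantOfRank L k ∧ L ⊆ S ∪ S'} := by
    rintro k ⟨L, h, hs⟩
    exact ⟨L, h, hs.trans Set.subset_union_left⟩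
  have hUrank : orthRank (S ∪ S') = n := by
    refine le_antisymm ?_ (csSup_le_csSup (bddAbove_rankSet _) hSne hUincl)
    refine csSup_le (hSne.mono hUincl) ?_
    rintro k ⟨L, hL, hLsub⟩
    obtain ⟨R, hR, _, hRS⟩ := hkey k L hL hLsub
    rcases hRS with h | h
    · exact le_orthRank hR h
    · exact (le_orthRank hR h).trans_eq hnS'
  have hexcl : ∀ L R R' : Set (Fin N → ℤ), IsOrthantOfRank L n → IsOrthantOfRank R n → IsOrthantOfRank R' n →
      R ⊆ L → R' ⊆ L → R ⊆ S → R' ⊆ S' → False := by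
    intro L R R' hL hR hR' hRL hR'L hRS hR'S'
    obtain ⟨V, hV, hVsub⟩ := sub_meet hL hR hR' hRL hR'L
    have : n ≤ orthRank (S ∩ S') :=
      le_orthRank hV (hVsub.trans (Set.inter_subset_inter hRS hR'S'))
    omega
  have hbridge : ∀ P Q : Set (Fin N → ℤ), IsOrthantOfRank P n → IsOrthantOfRank Q n → Commensurable P Q →
      ∃ T, IsOrthantOfRank T n ∧ T ⊆ P ∩ Q := by
    intro P Q hP hQ hPQ
    obtain ⟨hne2, hrk1, _⟩ := hPQ
    obtain ⟨T, hT, hTsub⟩ := exists_orthant_orthRank hne2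
    rw [← hrk1, orthRank_orthant hP] at hT
    exact ⟨T, hT, hTsub⟩
  have hside : ∀ P Q : Set (Fin N → ℤ), IsOrthantOfRank P n → IsOrthantOfRank Q n → Commensurable P Q →
      ∀ W : Set (Fin N → ℤ), (∃ R, IsOrthantOfRank R n ∧ R ⊆ P ∧ R ⊆ W) →
      (∃ R, IsOrthantOfRank R n ∧ R ⊆ Q ∧ R ⊆ W) := by
    rintro P Q hP hQ hPQ W ⟨R, hR, hRP, hRW⟩
    obtain ⟨T, hT, hTsub⟩ := hbridge P Q hP hQ hPQ
    obtain ⟨U, hU, hUsub⟩ := sub_meet hP hR hT hRP (hTsub.trans Set.inter_subset_left)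
    exact ⟨U, hU,
      (hUsub.trans Set.inter_subset_right).trans (hTsub.trans Set.inter_subset_right),
      (hUsub.trans Set.inter_subset_left).trans hRW⟩
  have hglue : ∀ P Q : Set (Fin N → ℤ), IsOrthantOfRank P n → IsOrthantOfRank Q n → Commensurable P Q →
      ∀ R R' : Set (Fin N → ℤ), IsOrthantOfRank R n → IsOrthantOfRank R' n → R ⊆ P → R' ⊆ Q →
      Commensurable R R' := by
    intro P Q hP hQ hPQ R R' hR hR' hRP hR'Q
    obtain ⟨T, hT, hTsub⟩ := hbridge P Q hP hQ hPQ
    obtain ⟨U, hU, hUsub⟩ := sub_meet hP hR hT hRP (hTsub.trans Set.inter_subset_left)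
    have hUQ : U ⊆ Q :=
      (hUsub.trans Set.inter_subset_right).trans (hTsub.trans Set.inter_subset_right)
    obtain ⟨V, hV, hVsub⟩ := sub_meet hQ hU hR' hUQ hR'Q
    exact comm_of_common hR hR' hV (Set.subset_inter
      ((hVsub.trans Set.inter_subset_left).trans (hUsub.trans Set.inter_subset_left))
      (hVsub.trans Set.inter_subset_right))
  have hTot : ∀ L : germSet (S ∪ S') n,
      (∃ R, IsOrthantOfRank R n ∧ R ⊆ L.1 ∧ R ⊆ S) ∨
      (∃ R, IsOrthantOfRank R n ∧ R ⊆ L.1 ∧ R ⊆ S') := by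
    intro L
    obtain ⟨R, hR, hRL, hRS⟩ := hkey n L.1 L.2.1 L.2.2
    rcases hRS with h | h
    · exact Or.inl ⟨R, hR, hRL, h⟩
    · exact Or.inr ⟨R, hR, hRL, h⟩
  have hresp : ∀ (L M : germSet (S ∪ S') n), Commensurable L.1 M.1 →
      psiFun S S' n hTot L = psiFun S S' n hTot M := by
    intro L M hLM
    have hL := L.2.1
    have hM := M.2.1
    by_cases hs : ∃ R, IsOrthantOfRank R n ∧ R ⊆ L.1 ∧ R ⊆ S
    · have hsM : ∃ R, IsOrthantOfRank R n ∧ R ⊆ M.1 ∧ R ⊆ S := hside L.1 M.1 hL hM hLM S hs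
      rw [psiFun, dif_pos hs, psiFun, dif_pos hsM]
      exact congrArg Sum.inl (Quot.sound (hglue L.1 M.1 hL hM hLM _ _
        hs.choose_spec.1 hsM.choose_spec.1 hs.choose_spec.2.1 hsM.choose_spec.2.1))
    · have hsM : ¬∃ R, IsOrthantOfRank R n ∧ R ⊆ M.1 ∧ R ⊆ S := by
        intro hc
        exact hs (hside M.1 L.1 hM hL (comm_symm hLM) S hc)
      rw [psiFun, dif_neg hs, psiFun, dif_neg hsM]
      have hL1 := (hTot L).resolve_left hs
      have hM1 := (hTot M).resolve_left hsM
      exact congrArg Sum.inr (Quot.sound (hglue L.1 M.1 hL hM hLM _ _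
        hL1.choose_spec.1 hM1.choose_spec.1 hL1.choose_spec.2.1 hM1.choose_spec.2.1))
  have hrespS : ∀ (L M : germSet S n), Commensurable L.1 M.1 →
      germOf (S ∪ S') n ⟨L.1, L.2.1, L.2.2.trans Set.subset_union_left⟩
      = germOf (S ∪ S') n ⟨M.1, M.2.1, M.2.2.trans Set.subset_union_left⟩ :=
    fun _ _ h => Quot.sound h
  have hrespS' : ∀ (L M : germSet S' n), Commensurable L.1 M.1 →
      germOf (S ∪ S') n ⟨L.1, L.2.1, L.2.2.trans Set.subset_union_right⟩
      = germOf (S ∪ S') n ⟨M.1, M.2.1, M.2.2.trans Set.subset_union_right⟩ :=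
    fun _ _ h => Quot.sound h
  obtain ⟨e⟩ : Nonempty (Germ (S ∪ S') n ≃ Germ S n ⊕ Germ S' n) := by
    refine ⟨{
      toFun := Quot.lift (psiFun S S' n hTot) hresp
      invFun := Sum.elim
        (Quot.lift (fun L : germSet S n =>
          germOf (S ∪ S') n ⟨L.1, L.2.1, L.2.2.trans Set.subset_union_left⟩) hrespS)
        (Quot.lift (fun L : germSet S' n =>
          germOf (S ∪ S') n ⟨L.1, L.2.1, L.2.2.trans Set.subset_union_right⟩) hrespS')
      left_inv := ?_
      right_inv := ?_ }⟩
    · intro q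
      induction q using Quot.ind with
      | _ L =>
        show Sum.elim _ _ (psiFun S S' n hTot L) = Quot.mk _ L
        by_cases hs : ∃ R, IsOrthantOfRank R n ∧ R ⊆ L.1 ∧ R ⊆ S
        · rw [psiFun, dif_pos hs]
          exact Quot.sound (comm_symm (comm_of_sub L.2.1 hs.choose_spec.1 hs.choose_spec.2.1))
        · rw [psiFun, dif_neg hs]
          have hL1 := (hTot L).resolve_left hs
          exact Quot.sound (comm_symm (comm_of_sub L.2.1 hL1.choose_spec.1 hL1.choose_spec.2.1))
    · intro x
      cases x with
      | inl q =>
        induction q using Quot.ind with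
        | _ L =>
          show Quot.lift (psiFun S S' n hTot) hresp
            (germOf (S ∪ S') n ⟨L.1, L.2.1, L.2.2.trans Set.subset_union_left⟩)
            = Sum.inl (Quot.mk _ L)
          have hs : ∃ R, IsOrthantOfRank R n ∧ R ⊆ L.1 ∧ R ⊆ S :=
            ⟨L.1, L.2.1, le_refl _, L.2.2⟩
          show psiFun S S' n hTot ⟨L.1, L.2.1, L.2.2.trans Set.subset_union_left⟩
            = Sum.inl (Quot.mk _ L)
          rw [psiFun, dif_pos hs]
          exact congrArg Sum.inl (Quot.sound (comm_symm
            (comm_of_sub L.2.1 hs.choose_spec.1 hs.choose_spec.2.1)))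
      | inr q =>
        induction q using Quot.ind with
        | _ L =>
          show Quot.lift (psiFun S S' n hTot) hresp
            (germOf (S ∪ S') n ⟨L.1, L.2.1, L.2.2.trans Set.subset_union_right⟩)
            = Sum.inr (Quot.mk _ L)
          have hs : ¬∃ R, IsOrthantOfRank R n ∧ R ⊆ L.1 ∧ R ⊆ S := by
            rintro ⟨R, hR, hRL, hRS⟩
            exact hexcl L.1 R L.1 L.2.1 hR L.2.1 hRL (le_refl _) hRS L.2.2
          show psiFun S S' n hTot ⟨L.1, L.2.1, L.2.2.trans Set.subset_union_right⟩
            = Sum.inr (Quot.mk _ L)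
          rw [psiFun, dif_neg hs]
          have hL1 := (hTot ⟨L.1, L.2.1, L.2.2.trans Set.subset_union_right⟩).resolve_left hs
          exact congrArg Sum.inr (Quot.sound (comm_symm
            (comm_of_sub L.2.1 hL1.choose_spec.1 hL1.choose_spec.2.1)))
  have fS : Finite (Germ S n) := by
    rw [hn]
    exact germ_finite hS
  have fS' : Finite (Germ S' n) := by
    rw [← hnS']
    exact germ_finite hS'
  have hcard : Nat.card (Germ (S ∪ S') n) = Nat.card (Germ S n) + Nat.card (Germ S' n) := by
    rw [Nat.card_congr e, Nat.card_sum]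
  show heightAt (S ∪ S') (orthRank (S ∪ S')) = heightAt S n + heightAt S' (orthRank S')
  rw [hUrank, hnS']
  exact hcard


end PeiPaper
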